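/- Let q ∈ R be such that ℓ = card(R/qR) is a rational prime with ℓ > n. Then conj(q) ∉ qR; equivalently, the colouring induced by qR is chirally perfect but not perfect (H = G'). -/

import Mathlib

open Complex

/-- The primitive `n`-th root of unity `ζ = exp(2πi/n)`. -/
noncomputable def zeta (n : ℕ) : ℂ := Complex.exp (2 * Real.pi * Complex.I / n)

/-- The ring of cyclotomic integers `M_n = ℤ[ζ_n]`, as a subring of `ℂ`. -/
noncomputable def Rn (n : ℕ) : Subring ℂ := Subring.closure {zeta n}

/-- `ζ_n` as an element of `M_n`. -/
noncomputable def zetaR (n : ℕ) : ↥(Rn n) := ⟨zeta n, Subring.subset_closure rfl⟩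

/-- `z ∈ ℂ` lies in the ideal `I` of `Rn n` (viewed inside `ℂ`). -/
def InIdeal (n : ℕ) (I : Ideal ↥(Rn n)) (z : ℂ) : Prop :=
  ∃ w : ↥(Rn n), w ∈ I ∧ (w : ℂ) = z

/-- An isometry of the complex plane: `z ↦ a z + b` or `z ↦ a conj z + b` with `|a| = 1`. -/
def IsIsometry (g : ℂ → ℂ) : Prop :=
  ∃ a b : ℂ, ‖a‖ = 1 ∧
    ((∀ z, g z = a * z + b) ∨ (∀ z, g z = a * (starRingEnd ℂ) z + b))

/-- An orientation-preserving isometry of the complex plane: `z ↦ a z + b` with `|a| = 1`. -/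
def IsOPIsometry (g : ℂ → ℂ) : Prop :=
  ∃ a b : ℂ, ‖a‖ = 1 ∧ ∀ z, g z = a * z + b

/-- `g` is a colour symmetry of the colouring of `Rn n` induced by the ideal `I`. -/
def IsColourSym (n : ℕ) (I : Ideal ↥(Rn n)) (g : ℂ → ℂ) : Prop :=
  ∀ x y : ℂ, x ∈ Rn n → y ∈ Rn n → (InIdeal n I (x - y) ↔ InIdeal n I (g x - g y))

/-- The colouring induced by `I` is perfect. -/
def IsPerfectColouring (n : ℕ) (I : Ideal ↥(Rn n)) : Prop :=
  ∀ g : ℂ → ℂ, IsIsometry g → g '' (Rn n : Set ℂ) = (Rn n : Set ℂ) → IsColourSym n I g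

/-- The colouring induced by `I` is chirally perfect. -/
def IsChirallyPerfectColouring (n : ℕ) (I : Ideal ↥(Rn n)) : Prop :=
  ∀ g : ℂ → ℂ, IsOPIsometry g → g '' (Rn n : Set ℂ) = (Rn n : Set ℂ) → IsColourSym n I g

/-! ### Auxiliary lemmas -/

lemma zeta_prim (n : ℕ) (hn : 3 ≤ n) : IsPrimitiveRoot (zeta n) n :=
  Complex.isPrimitiveRoot_exp n (by omega)

lemma zeta_pow (n : ℕ) (hn : 3 ≤ n) : zeta n ^ n = 1 := (zeta_prim n hn).pow_eq_one

lemma zeta_ne_one (n : ℕ) (hn : 3 ≤ n) : zeta n ≠ 1 := (zeta_prim n hn).ne_one (by omega)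

lemma zeta_sq_ne_one (n : ℕ) (hn : 3 ≤ n) : zeta n ^ 2 ≠ 1 :=
  (zeta_prim n hn).pow_ne_one_of_pos_of_lt (by omega) (by omega)

lemma zeta_ne_zero (n : ℕ) (hn : 3 ≤ n) : zeta n ≠ 0 := (zeta_prim n hn).ne_zero (by omega)

lemma conj_zeta (n : ℕ) (hn : 3 ≤ n) : (starRingEnd ℂ) (zeta n) = zeta n ^ (n - 1) := by
  have habs : ‖zeta n‖ = 1 := by
    unfold zeta
    rw [Complex.norm_exp]
    have h : (2 * (Real.pi:ℂ) * Complex.I / (n:ℂ)).re = 0 := by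
      simp [Complex.div_re, Complex.mul_re]
    rw [h, Real.exp_zero]
  have h1 : zeta n * (starRingEnd ℂ) (zeta n) = 1 := by
    rw [Complex.mul_conj, Complex.normSq_eq_norm_sq, habs]
    norm_num
  have h2 : zeta n * zeta n ^ (n - 1) = 1 := by
    rw [← pow_succ']
    have h3 : n - 1 + 1 = n := by omega
    rw [h3, zeta_pow n hn]
  exact mul_left_cancel₀ (zeta_ne_zero n hn) (h1.trans h2.symm)

lemma conj_mem (n : ℕ) (hn : 3 ≤ n) (x : ℂ) (hx : x ∈ Rn n) : (starRingEnd ℂ) x ∈ Rn n := by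
  unfold Rn at hx ⊢
  refine Subring.closure_induction (p := fun z _ => (starRingEnd ℂ) z ∈ Subring.closure {zeta n})
    ?_ ?_ ?_ ?_ ?_ ?_ hx
  · rintro z rfl
    rw [conj_zeta n hn]
    apply Subring.pow_mem
    exact Subring.subset_closure rfl
  · show (starRingEnd ℂ) 0 ∈ _; rw [map_zero]; exact zero_mem _
  · show (starRingEnd ℂ) 1 ∈ _; rw [map_one]; exact one_mem _
  · intro a b _ _ ha hb; rw [map_add]; exact add_mem ha hb
  · intro a _ ha; rw [map_neg]; exact neg_mem ha
  · intro a b _ _ ha hb; rw [map_mul]; exact mul_mem ha hb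

/-- Complex conjugation restricted to `Rn n`. -/
noncomputable def sigmaR (n : ℕ) (hn : 3 ≤ n) : ↥(Rn n) →+* ↥(Rn n) where
  toFun x := ⟨(starRingEnd ℂ) (x : ℂ), conj_mem n hn _ x.2⟩
  map_one' := by ext; simp
  map_mul' a b := by ext; simp
  map_zero' := by ext; simp
  map_add' a b := by ext; simp

lemma sigmaR_apply (n : ℕ) (hn : 3 ≤ n) (x : ↥(Rn n)) :
    ((sigmaR n hn x : ↥(Rn n)) : ℂ) = (starRingEnd ℂ) (x : ℂ) := rfl


/-- Abstract arithmetic core. -/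
lemma core_contradiction {R : Type*} [CommRing R] (I : Ideal R) (σ : R →+* R)
    (hσI : ∀ x ∈ I, σ x ∈ I) (ζ : R) (n : ℕ) (hn : 3 ≤ n)
    (hσζ : σ ζ = ζ ^ (n - 1)) (hζn : ζ ^ n = 1)
    (hsum : ∑ j ∈ Finset.range n, ζ ^ j = 0)
    (hsum2 : ∀ m : ℕ, 2 * m = n → ∑ j ∈ Finset.range m, (ζ ^ 2) ^ j = 0)
    (hprime : (Nat.card (R ⧸ I)).Prime) (hgt : n < Nat.card (R ⧸ I)) : False := by
  set ℓ := Nat.card (R ⧸ I) with hℓ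
  set π := Ideal.Quotient.mk I with hπ
  have hFfin : Finite (R ⧸ I) := Nat.finite_of_card_ne_zero hprime.pos.ne'
  have h10 : (1 : R ⧸ I) ≠ 0 := by
    intro h
    have hsub : Subsingleton (R ⧸ I) := subsingleton_of_zero_eq_one h.symm
    have : ℓ = 1 := Nat.card_of_subsingleton (0 : R ⧸ I)
    exact hprime.ne_one this
  have hord : addOrderOf (1 : R ⧸ I) = ℓ := by
    rcases hprime.eq_one_or_self_of_dvd _ (addOrderOf_dvd_natCard (1 : R ⧸ I)) with h | h
    · exact absurd (AddMonoid.addOrderOf_eq_one_iff.mp h) h10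
    · exact h
  have hzcast : ∀ k : ℤ, (k : R ⧸ I) = 0 ↔ (ℓ : ℤ) ∣ k := by
    intro k
    have h := addOrderOf_dvd_iff_zsmul_eq_zero (x := (1 : R ⧸ I)) (i := k)
    rw [zsmul_eq_mul, mul_one, hord] at h
    exact h.symm
  have hncast : ∀ m : ℕ, (m : R ⧸ I) = 0 → ℓ ∣ m := by
    intro m hm
    have : ((m : ℤ) : R ⧸ I) = 0 := by push_cast; exact hm
    exact_mod_cast (hzcast (m : ℤ)).mp this
  have hgen : ∀ x : R ⧸ I, ∃ k : ℤ, (k : R ⧸ I) = x := by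
    intro x
    have hcard : Nat.card (AddSubgroup.zmultiples (1 : R ⧸ I)) = Nat.card (R ⧸ I) := by
      rw [Nat.card_zmultiples, hord]
    have htop : AddSubgroup.zmultiples (1 : R ⧸ I) = ⊤ := AddSubgroup.eq_top_of_card_eq _ hcard
    have hx : x ∈ AddSubgroup.zmultiples (1 : R ⧸ I) := htop ▸ AddSubgroup.mem_top x
    obtain ⟨k, hk⟩ := AddSubgroup.mem_zmultiples_iff.mp hx
    exact ⟨k, by rw [← hk, zsmul_eq_mul, mul_one]⟩
  have hσπ : ∀ x : R, π (σ x) = π x := by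
    intro x
    obtain ⟨k, hk⟩ := hgen (π x)
    have h1 : x - (k : R) ∈ I := by
      rw [← Ideal.Quotient.eq_zero_iff_mem, map_sub, map_intCast, hk, sub_self]
    have h2 : σ x - (k : R) ∈ I := by
      have := hσI _ h1
      rwa [map_sub, map_intCast] at this
    have e2 : π (σ x) = (k : R ⧸ I) := by
      have := Ideal.Quotient.eq_zero_iff_mem.mpr h2
      rwa [map_sub, map_intCast, sub_eq_zero] at this
    rw [e2, hk]
  set u := π ζ with hu
  have hun : u ^ n = 1 := by rw [hu, ← map_pow, hζn, map_one]
  have hu2 : u ^ 2 = 1 := by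
    have hkey : u ^ (n - 1) = u := by rw [hu, ← map_pow, ← hσζ, hσπ]
    calc u ^ 2 = u * u := sq u
    _ = u * u ^ (n - 1) := by rw [hkey]
    _ = u ^ (n - 1 + 1) := by rw [← pow_succ']
    _ = 1 := by rw [show n - 1 + 1 = n by omega, hun]
  have husq : u = 1 ∨ u = -1 := by
    obtain ⟨k, hk⟩ := hgen u
    have hk2 : ((k ^ 2 - 1 : ℤ) : R ⧸ I) = 0 := by push_cast; rw [hk, hu2, sub_self]
    have hdvd : (ℓ : ℤ) ∣ (k - 1) * (k + 1) := by
      have h := (hzcast _).mp hk2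
      have heq : (k : ℤ) ^ 2 - 1 = (k - 1) * (k + 1) := by ring
      rwa [heq] at h
    rcases (Int.prime_iff_natAbs_prime.mpr (by simpa using hprime)).dvd_mul.mp hdvd with h | h
    · left
      have h' : ((k - 1 : ℤ) : R ⧸ I) = 0 := (hzcast _).mpr h
      push_cast at h'
      rw [← hk]; linear_combination h'
    · right
      have h' : ((k + 1 : ℤ) : R ⧸ I) = 0 := (hzcast _).mpr h
      push_cast at h'
      rw [← hk]; linear_combination h'
  have hsumF : (∑ j ∈ Finset.range n, u ^ j) = 0 := by
    rw [hu]
    calc ∑ j ∈ Finset.range n, (π ζ) ^ j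
        = π (∑ j ∈ Finset.range n, ζ ^ j) := by rw [map_sum]; simp [map_pow]
    _ = 0 := by rw [hsum, map_zero]
  rcases husq with h1 | hm1
  · rw [h1] at hsumF
    simp only [one_pow, Finset.sum_const, Finset.card_range, nsmul_eq_mul, mul_one] at hsumF
    have h := hncast n hsumF
    have := Nat.le_of_dvd (by omega) h
    omega
  · rcases Nat.even_or_odd n with heven | hodd
    · obtain ⟨m, hm⟩ := heven
      have hmn : 2 * m = n := by omega
      have hsum2R := hsum2 m hmn
      have hsum2F : (∑ j ∈ Finset.range m, (u ^ 2) ^ j) = 0 := by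
        rw [hu]
        calc ∑ j ∈ Finset.range m, ((π ζ) ^ 2) ^ j
            = π (∑ j ∈ Finset.range m, (ζ ^ 2) ^ j) := by rw [map_sum]; simp [map_pow]
        _ = 0 := by rw [hsum2R, map_zero]
      rw [hu2] at hsum2F
      simp only [one_pow, Finset.sum_const, Finset.card_range, nsmul_eq_mul, mul_one] at hsum2F
      have h := hncast m hsum2F
      have := Nat.le_of_dvd (by omega) h
      omega
    · rw [hm1, hodd.neg_one_pow] at hun
      have h2 : ((2 : ℤ) : R ⧸ I) = 0 := by push_cast; linear_combination -hun
      have h := (hzcast 2).mp h2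
      have : (ℓ : ℤ) ≤ 2 := Int.le_of_dvd (by norm_num) h
      omega

/-- Part 2 for any ideal: the colouring is chirally perfect. -/
lemma chirally_perfect (n : ℕ) (I : Ideal ↥(Rn n)) : IsChirallyPerfectColouring n I := by
  rintro g ⟨a, b, habs, hg⟩ himg x y hx hy
  have hb : b ∈ Rn n := by
    have h0 : g 0 ∈ (Rn n : Set ℂ) := himg ▸ Set.mem_image_of_mem g (Rn n).zero_mem
    simpa [hg 0] using h0
  have haR : a ∈ Rn n := by
    have h1 : g 1 ∈ (Rn n : Set ℂ) := himg ▸ Set.mem_image_of_mem g (Rn n).one_mem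
    have : a * 1 + b ∈ (Rn n : Set ℂ) := hg 1 ▸ h1
    have h2 : a + b ∈ Rn n := by simpa using this
    simpa using sub_mem h2 hb
  obtain ⟨z, hzR, hz⟩ : ∃ z, z ∈ Rn n ∧ a * z = 1 := by
    have h1b : (1 : ℂ) + b ∈ (Rn n : Set ℂ) := add_mem (Rn n).one_mem hb
    rw [← himg] at h1b
    obtain ⟨z, hzR, hgz⟩ := h1b
    refine ⟨z, hzR, ?_⟩
    rw [hg z] at hgz
    linear_combination hgz
  set A : ↥(Rn n) := ⟨a, haR⟩
  set Z : ↥(Rn n) := ⟨z, hzR⟩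
  have hgd : g x - g y = a * (x - y) := by rw [hg x, hg y]; ring
  rw [hgd]
  constructor
  · rintro ⟨w, hw, hwc⟩
    exact ⟨A * w, I.mul_mem_left A hw, by push_cast [hwc]; ring⟩
  · rintro ⟨w, hw, hwc⟩
    refine ⟨Z * w, I.mul_mem_left Z hw, ?_⟩
    push_cast [hwc]
    calc z * (a * (x - y)) = (a * z) * (x - y) := by ring
    _ = x - y := by rw [hz, one_mul]

/-- Part 1: `conj q ∉ qR`. -/
lemma conj_not_mem (n : ℕ) (hn : 3 ≤ n) (q : ↥(Rn n))
    (hprime : (Nat.card (↥(Rn n) ⧸ Ideal.span {q})).Prime)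
    (hgt : n < Nat.card (↥(Rn n) ⧸ Ideal.span {q})) :
    ¬ InIdeal n (Ideal.span {q}) ((starRingEnd ℂ) (q : ℂ)) := by
  intro hcq
  obtain ⟨w, hwI, hwc⟩ := hcq
  refine core_contradiction (Ideal.span {q}) (sigmaR n hn) ?_ (zetaR n) n hn ?_ ?_ ?_ ?_ hprime hgt
  · intro x hx
    rw [Ideal.mem_span_singleton] at hx ⊢
    obtain ⟨c, rfl⟩ := hx
    have hσq : sigmaR n hn q = w := Subtype.ext (by rw [sigmaR_apply, ← hwc])
    rw [map_mul, hσq]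
    exact dvd_mul_of_dvd_left (Ideal.mem_span_singleton.mp hwI) _
  · apply Subtype.ext
    rw [sigmaR_apply]
    push_cast
    exact conj_zeta n hn
  · apply Subtype.ext
    push_cast
    exact zeta_pow n hn
  · apply Subtype.ext
    push_cast
    show (∑ x ∈ Finset.range n, zeta n ^ x) = 0
    rw [geom_sum_eq (zeta_ne_one n hn), zeta_pow n hn, sub_self, zero_div]
  · intro m hm
    apply Subtype.ext
    push_cast
    show (∑ x ∈ Finset.range m, (zeta n ^ 2) ^ x) = 0
    rw [geom_sum_eq (zeta_sq_ne_one n hn), ← pow_mul, hm, zeta_pow n hn, sub_self, zero_div]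

/-- if `ℓ = card(R/qR)` is a rational prime with `ℓ > n`, then
`conj q ∉ qR`; equivalently the colouring induced by `qR` is chirally perfect but not
perfect (`H = G'`). -/
theorem stmt17 (n : ℕ) (hn : 3 ≤ n) (hn2 : n % 4 ≠ 2) (q : ↥(Rn n))
    (hprime : (Nat.card (↥(Rn n) ⧸ Ideal.span {q})).Prime)
    (hgt : n < Nat.card (↥(Rn n) ⧸ Ideal.span {q})) :
    ¬ InIdeal n (Ideal.span {q}) ((starRingEnd ℂ) (q : ℂ)) ∧
    IsChirallyPerfectColouring n (Ideal.span {q}) ∧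
    ¬ IsPerfectColouring n (Ideal.span {q}) := by
  have hnot := conj_not_mem n hn q hprime hgt
  refine ⟨hnot, chirally_perfect n _, ?_⟩
  intro hperf
  have hiso : IsIsometry (starRingEnd ℂ) := by
    refine ⟨1, 0, by simp, Or.inr ?_⟩
    intro z; simp
  have himg : (starRingEnd ℂ) '' (Rn n : Set ℂ) = (Rn n : Set ℂ) := by
    apply Set.Subset.antisymm
    · rintro _ ⟨x, hx, rfl⟩
      exact conj_mem n hn x hx
    · intro x hx
      exact ⟨(starRingEnd ℂ) x, conj_mem n hn x hx, by simp⟩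
  have hcs := hperf _ hiso himg (q : ℂ) 0 q.2 (zero_mem _)
  have hq : InIdeal n (Ideal.span {q}) ((q : ℂ) - 0) :=
    ⟨q, Ideal.mem_span_singleton_self q, by simp⟩
  have := hcs.mp hq
  apply hnot
  simpa using this
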